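/- The function T_\alpha satisfies the self-similarity relation 2 T_\alpha(p) = T_\alpha(2p) + 2 p H(\alpha) for all p \in [0, 1/2]. -/

import Mathlib

open Finset
open Filter Topology

/-- `f2 x = -x log₂ x`, the summand of base-2 Shannon entropy. -/
noncomputable def f2 (x : ℝ) : ℝ := -x * Real.logb 2 x

/-- Binary entropy function `H(α)` (base 2). -/
noncomputable def binEnt (α : ℝ) : ℝ := f2 α + f2 (1 - α)

/-- Joint pmf of `(Xⁿ, Yⁿ)` where `Xⁿ` is i.i.d. Bernoulli(1/2) and
`Yⁿ = Xⁿ ⊕ Zⁿ` with `Zⁿ` i.i.d. Bernoulli(α) (a memoryless BSC(α)). -/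
noncomputable def jointP (n : ℕ) (α : ℝ) (x y : Fin n → Bool) : ℝ :=
  (1/2)^n * ∏ i, (if x i = y i then 1 - α else α)

/-- `Pr{b(Xⁿ) = u, Yⁿ = y}`. -/
noncomputable def pBY (n : ℕ) (α : ℝ) (b : (Fin n → Bool) → Bool) (u : Bool)
    (y : Fin n → Bool) : ℝ :=
  ∑ x : Fin n → Bool, if b x = u then jointP n α x y else 0

/-- `Pr{b(Xⁿ) = u}` for `Xⁿ` uniform on `{0,1}ⁿ`. -/
noncomputable def pB (n : ℕ) (b : (Fin n → Bool) → Bool) (u : Bool) : ℝ :=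
  ∑ x : Fin n → Bool, if b x = u then (1/2)^n else 0

/-- `H(b(Xⁿ))`, the entropy of the Boolean function's output. -/
noncomputable def HB (n : ℕ) (b : (Fin n → Bool) → Bool) : ℝ :=
  ∑ u : Bool, f2 (pB n b u)

/-- `Pr{b(Xⁿ) = 0 ∣ Yⁿ = y}` (note `Pr{Yⁿ = y} = 2⁻ⁿ` since `Yⁿ` is uniform;
`0` is encoded as `false`). -/
noncomputable def condP (n : ℕ) (α : ℝ) (b : (Fin n → Bool) → Bool)
    (y : Fin n → Bool) : ℝ :=
  (2:ℝ)^n * pBY n α b false y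

/-- The conditional entropy `H(b(Xⁿ) ∣ Yⁿ)`. -/
noncomputable def condHB (n : ℕ) (α : ℝ) (b : (Fin n → Bool) → Bool) : ℝ :=
  ∑ y : Fin n → Bool, (1/2)^n * ∑ u : Bool, f2 ((2:ℝ)^n * pBY n α b u y)

/-- The mutual information `I(b(Xⁿ); Yⁿ) = H(b(Xⁿ)) - H(b(Xⁿ) ∣ Yⁿ)`. -/
noncomputable def MI (n : ℕ) (α : ℝ) (b : (Fin n → Bool) → Bool) : ℝ :=
  HB n b - condHB n α b

/-- The numeric value of `x ∈ {0,1}ⁿ` with the first coordinate most significant;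
`x ≺_L x'` in the lexicographic order iff `vecVal x < vecVal x'`. -/
def vecVal {n : ℕ} (x : Fin n → Bool) : ℕ :=
  ∑ i : Fin n, if x i then 2 ^ (n - 1 - i.val) else 0

/-- The unique lex Boolean function on `n` inputs whose preimage of `0` (= `false`)
is the initial segment of size `k` of the lexicographic order on `{0,1}ⁿ`. -/
def lexFun (n k : ℕ) : (Fin n → Bool) → Bool := fun x => decide (k ≤ vecVal x)

/-- `T_α` at the dyadic rational `k/2ⁿ`:
`T_α(k/2ⁿ) = E_{Yⁿ} f(Pr{b(Xⁿ)=0 ∣ Yⁿ})` where `b` is the lex function on `n`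
inputs with `Pr{b(Xⁿ)=0} = k/2ⁿ`. -/
noncomputable def Tdy (α : ℝ) (n k : ℕ) : ℝ :=
  ∑ y : Fin n → Bool, (1/2)^n * f2 (condP n α (lexFun n k) y)

lemma vecVal_succ {n : ℕ} (x : Fin (n+1) → Bool) :
    vecVal x = (if x 0 then 2^n else 0) + vecVal (Fin.tail x) := by
  unfold vecVal
  rw [Fin.sum_univ_succ]
  congr 1
  refine Finset.sum_congr rfl fun i _ => ?_
  have : n - (i.val + 1) = n - 1 - i.val := by omega
  simp [Fin.tail, this]
  rfl

lemma vecVal_lt {n : ℕ} (x : Fin n → Bool) : vecVal x < 2^n := by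
  induction n with
  | zero => simp [vecVal]
  | succ n ih =>
    rw [vecVal_succ]
    have := ih (Fin.tail x)
    rw [pow_succ]
    split <;> omega

lemma vecVal_inj {n : ℕ} : Function.Injective (vecVal (n := n)) := by
  induction n with
  | zero => intro x y _; funext i; exact absurd i.2 (by omega)
  | succ n ih =>
    intro x y h
    rw [vecVal_succ, vecVal_succ] at h
    have hx := vecVal_lt (Fin.tail x)
    have hy := vecVal_lt (Fin.tail y)
    have h0 : x 0 = y 0 := by
      by_contra hne
      rcases Bool.eq_false_or_eq_true (x 0) with h1 | h1 <;>
        rcases Bool.eq_false_or_eq_true (y 0) with h2 | h2 <;>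
          simp [h1, h2] at h hne <;> omega
    have ht : Fin.tail x = Fin.tail y := by
      apply ih; rw [h0] at h; split at h <;> omega
    rw [← Fin.cons_self_tail x, ← Fin.cons_self_tail y, h0, ht]

lemma card_vecVal_lt (n k : ℕ) (hk : k ≤ 2^n) :
    (univ.filter (fun x : Fin n → Bool => vecVal x < k)).card = k := by
  have himg : (univ : Finset (Fin n → Bool)).image vecVal = Finset.range (2^n) := by
    apply Finset.eq_of_subset_of_card_le
    · intro a ha
      simp only [Finset.mem_image] at ha
      obtain ⟨x, _, rfl⟩ := ha
      exact Finset.mem_range.2 (vecVal_lt x)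
    · rw [Finset.card_range, Finset.card_image_of_injective _ vecVal_inj]
      simp
  have h1 : ((univ.filter (fun x : Fin n → Bool => vecVal x < k)).image vecVal).card
      = (univ.filter (fun x : Fin n → Bool => vecVal x < k)).card :=
    Finset.card_image_of_injective _ vecVal_inj
  rw [← h1, ← Finset.filter_image (f := vecVal) (s := univ) (p := (· < k)), himg]
  rw [show (Finset.range (2^n)).filter (fun a => a < k) = Finset.range k by
    ext a; simp only [Finset.mem_filter, Finset.mem_range]; omega]
  exact Finset.card_range k

lemma pB_lexFun (n k : ℕ) (hk : k ≤ 2^n) : pB n (lexFun n k) false = (k:ℝ)/2^n := by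
  unfold pB
  rw [← Finset.sum_filter, Finset.sum_const]
  have : (univ.filter (fun x : Fin n → Bool => lexFun n k x = false))
      = univ.filter (fun x => vecVal x < k) := by
    apply Finset.filter_congr; intro x _; simp [lexFun]
  rw [this, card_vecVal_lt n k hk]
  simp [div_eq_mul_inv, mul_comm]

lemma lexFun_succ (n k : ℕ) (hk : k ≤ 2^n) (x : Fin (n+1) → Bool) :
    lexFun (n+1) k x = if x 0 then true else lexFun n k (Fin.tail x) := by
  unfold lexFun
  rw [vecVal_succ]
  cases h : x 0 <;> simp
  omega

lemma sum_consB {M : Type*} [AddCommMonoid M] (n : ℕ) (g : (Fin (n+1) → Bool) → M) :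
    ∑ x : Fin (n+1) → Bool, g x = ∑ b : Bool, ∑ x' : Fin n → Bool, g (Fin.cons b x') := by
  rw [← (Fin.consEquiv (fun _ => Bool)).sum_comp g, Fintype.sum_prod_type]
  rfl

lemma f2_mul (a b : ℝ) : f2 (a * b) = a * f2 b + b * f2 a := by
  rcases eq_or_ne a 0 with rfl | ha
  · simp [f2]
  rcases eq_or_ne b 0 with rfl | hb
  · simp [f2]
  unfold f2 Real.logb
  rw [Real.log_mul ha hb]
  ring

lemma jointP_succ (n : ℕ) (α : ℝ) (x y : Fin (n+1) → Bool) :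
    jointP (n+1) α x y
      = (1/2) * (if x 0 = y 0 then 1 - α else α) * jointP n α (Fin.tail x) (Fin.tail y) := by
  unfold jointP
  rw [Fin.prod_univ_succ, pow_succ]
  simp only [Fin.tail]
  ring
  rfl

lemma pBY_succ (n k : ℕ) (α : ℝ) (hk : k ≤ 2^n) (y : Fin (n+1) → Bool) :
    pBY (n+1) α (lexFun (n+1) k) false y
      = (1/2) * (if y 0 then α else 1 - α) * pBY n α (lexFun n k) false (Fin.tail y) := by
  unfold pBY
  rw [sum_consB, Fintype.sum_bool]
  have htrue : ∀ x' : Fin n → Bool,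
      (if lexFun (n+1) k (Fin.cons true x') = false then jointP (n+1) α (Fin.cons true x') y else 0) = 0 := by
    intro x'; rw [lexFun_succ n k hk]; simp
  rw [Finset.sum_congr rfl (fun x' _ => htrue x'), Finset.sum_const, smul_zero, zero_add,
    Finset.mul_sum]
  refine Finset.sum_congr rfl fun x' _ => ?_
  rw [lexFun_succ n k hk]
  simp only [Fin.cons_zero, Fin.tail_cons, if_false, Bool.false_eq_true]
  rw [jointP_succ]
  simp only [Fin.cons_zero, Fin.tail_cons]
  have : (if (false : Bool) = y 0 then 1 - α else α) = (if y 0 then α else 1 - α) := by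
    cases h : y 0 <;> simp
  rw [this]
  split <;> ring

lemma condP_succ (n k : ℕ) (α : ℝ) (hk : k ≤ 2^n) (y : Fin (n+1) → Bool) :
    condP (n+1) α (lexFun (n+1) k) y
      = (if y 0 then α else 1 - α) * condP n α (lexFun n k) (Fin.tail y) := by
  unfold condP
  rw [pBY_succ n k α hk, pow_succ]
  ring

lemma sum_jointP (n : ℕ) (α : ℝ) (x : Fin n → Bool) :
    ∑ y : Fin n → Bool, jointP n α x y = (1/2)^n := by
  unfold jointP
  rw [← Finset.mul_sum]
  have : ∑ y : Fin n → Bool, ∏ i, (if x i = y i then 1 - α else α)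
      = ∏ i : Fin n, ∑ b : Bool, (if x i = b then 1 - α else α) := by
    rw [Fintype.prod_sum (fun i b => if x i = b then 1 - α else α)]
  rw [this]
  have : ∀ i : Fin n, (∑ b : Bool, (if x i = b then 1 - α else α)) = 1 := by
    intro i; rw [Fintype.sum_bool]; cases h : x i <;> simp
  rw [Finset.prod_congr rfl (fun i _ => this i), Finset.prod_const_one, mul_one]

lemma sum_pBY (n : ℕ) (α : ℝ) (b : (Fin n → Bool) → Bool) :
    ∑ y : Fin n → Bool, pBY n α b false y = pB n b false := by
  unfold pBY pB
  rw [Finset.sum_comm]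
  refine Finset.sum_congr rfl fun x _ => ?_
  split
  · exact sum_jointP n α x
  · simp

lemma sum_condP (n k : ℕ) (α : ℝ) (hk : k ≤ 2^n) :
    ∑ y : Fin n → Bool, (1/2:ℝ)^n * condP n α (lexFun n k) y = (k:ℝ)/2^n := by
  unfold condP
  rw [← Finset.mul_sum, ← Finset.mul_sum, sum_pBY, pB_lexFun n k hk]
  have h : ((1/2:ℝ))^n * (2:ℝ)^n = 1 := by
    rw [← mul_pow]; norm_num
  rw [← mul_assoc, h, one_mul]

lemma Tdy_step (α : ℝ) (n k : ℕ) (hk : k ≤ 2^n) :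
    2 * Tdy α (n+1) k = Tdy α n k + ((k:ℝ)/2^n) * binEnt α := by
  have key : Tdy α (n+1) k
      = ∑ y : Fin n → Bool, (1/2:ℝ)^(n+1) *
          (f2 (condP n α (lexFun n k) y) + condP n α (lexFun n k) y * binEnt α) := by
    unfold Tdy
    rw [sum_consB, Fintype.sum_bool, ← Finset.sum_add_distrib]
    refine Finset.sum_congr rfl fun y _ => ?_
    rw [condP_succ n k α hk, condP_succ n k α hk]
    simp only [Fin.cons_zero, Fin.tail_cons, if_true, Bool.false_eq_true, if_false]
    rw [f2_mul, f2_mul]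
    unfold binEnt
    ring
  rw [key, Finset.mul_sum]
  have h2 := sum_condP n k α hk
  calc ∑ y : Fin n → Bool, 2 * ((1/2:ℝ)^(n+1) *
          (f2 (condP n α (lexFun n k) y) + condP n α (lexFun n k) y * binEnt α))
      = ∑ y : Fin n → Bool, ((1/2:ℝ)^n * f2 (condP n α (lexFun n k) y)
          + binEnt α * ((1/2:ℝ)^n * condP n α (lexFun n k) y)) := by
        refine Finset.sum_congr rfl fun y _ => ?_
        rw [pow_succ]
        ring
    _ = Tdy α n k + ((k:ℝ)/2^n) * binEnt α := by
        rw [Finset.sum_add_distrib]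
        have h3 : ∑ x : Fin n → Bool, binEnt α * ((1/2:ℝ)^n * condP n α (lexFun n k) x)
            = binEnt α * ((k:ℝ)/2^n) := by rw [← Finset.mul_sum, h2]
        rw [h3]
        unfold Tdy
        ring

/-- Self-similarity of `T_α` (the continuous extension to `[0,1]` of its values at
dyadic rationals): `2 T_α(p) = T_α(2p) + 2p H(α)` for all `p ∈ [0, 1/2]`. -/
theorem T_self_similar (α : ℝ) (hα : α ∈ Set.Ioo (0:ℝ) (1/2)) (Tα : ℝ → ℝ)
    (hcont : ContinuousOn Tα (Set.Icc 0 1))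
    (hdy : ∀ n k : ℕ, k ≤ 2^n → Tα ((k:ℝ)/2^n) = Tdy α n k) :
    ∀ p ∈ Set.Icc (0:ℝ) (1/2), 2 * Tα p = Tα (2 * p) + 2 * p * binEnt α := by
  intro p hp
  obtain ⟨hp0, hp2⟩ := hp
  -- the approximating dyadic sequence
  set s : ℕ → ℝ := fun m => (⌊p * 2^(m+1)⌋₊ : ℝ) / 2^(m+1) with hs
  have hpow : Tendsto (fun m : ℕ => (2:ℝ)^(m+1)) atTop atTop := by
    exact (tendsto_pow_atTop_atTop_of_one_lt one_lt_two).comp (tendsto_add_atTop_nat 1)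
  have hs_lim : Tendsto s atTop (𝓝 p) :=
    (tendsto_nat_floor_mul_div_atTop hp0).comp hpow
  have hkle : ∀ m : ℕ, ⌊p * 2^(m+1)⌋₊ ≤ 2^m := by
    intro m
    have h1 : p * 2^(m+1) ≤ ((2^m : ℕ) : ℝ) := by
      push_cast
      rw [pow_succ]
      nlinarith [pow_pos (by norm_num : (0:ℝ) < 2) m]
    calc ⌊p * 2^(m+1)⌋₊ ≤ ⌊((2^m : ℕ) : ℝ)⌋₊ := Nat.floor_le_floor h1
      _ = 2^m := Nat.floor_natCast _
  have hs_mem : ∀ m : ℕ, s m ∈ Set.Icc (0:ℝ) (1/2) := by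
    intro m
    constructor
    · positivity
    · rw [div_le_iff₀ (by positivity)]
      have h2 : ((⌊p * 2^(m+1)⌋₊ : ℝ)) ≤ (2:ℝ)^m := by
        calc ((⌊p * 2^(m+1)⌋₊ : ℝ)) ≤ ((2^m : ℕ) : ℝ) := by exact_mod_cast hkle m
          _ = (2:ℝ)^m := by push_cast; ring
      have e : (2:ℝ)^(m+1) = 2^m * 2 := pow_succ 2 m
      linarith
  -- the identity holds along the sequence
  have hid : ∀ m : ℕ, 2 * Tα (s m) = Tα (2 * s m) + 2 * s m * binEnt α := by
    intro m
    set k := ⌊p * 2^(m+1)⌋₊ with hkdef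
    have hk1 : k ≤ 2^(m+1) := le_trans (hkle m) (Nat.pow_le_pow_right (by norm_num) (by omega))
    have e1 : Tα (s m) = Tdy α (m+1) k := by
      have := hdy (m+1) k hk1
      rw [hs]
      simpa using this
    have e2 : 2 * s m = (k:ℝ)/2^m := by
      rw [hs]
      field_simp
      ring
    have e3 : Tα (2 * s m) = Tdy α m k := by rw [e2]; exact hdy m k (hkle m)
    rw [e1, e3, e2, Tdy_step α m k (hkle m)]
  -- pass to the limit
  have hmem01 : ∀ m, s m ∈ Set.Icc (0:ℝ) 1 := fun m =>
    ⟨(hs_mem m).1, le_trans (hs_mem m).2 (by norm_num)⟩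
  have hmem01' : ∀ m, 2 * s m ∈ Set.Icc (0:ℝ) 1 := fun m =>
    ⟨by linarith [(hs_mem m).1], by linarith [(hs_mem m).2]⟩
  have hp01 : p ∈ Set.Icc (0:ℝ) 1 := ⟨hp0, by linarith⟩
  have h2p01 : 2 * p ∈ Set.Icc (0:ℝ) 1 := ⟨by linarith, by linarith⟩
  have hT1 : Tendsto (fun m => Tα (s m)) atTop (𝓝 (Tα p)) := by
    refine (hcont p hp01).tendsto.comp ?_
    exact tendsto_nhdsWithin_of_tendsto_nhds_of_eventually_within s hs_lim
      (Eventually.of_forall hmem01)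
  have hT2 : Tendsto (fun m => Tα (2 * s m)) atTop (𝓝 (Tα (2 * p))) := by
    refine (hcont (2 * p) h2p01).tendsto.comp ?_
    refine tendsto_nhdsWithin_of_tendsto_nhds_of_eventually_within _ ?_
      (Eventually.of_forall hmem01')
    exact (hs_lim.const_mul 2)
  have hT3 : Tendsto (fun m => 2 * s m * binEnt α) atTop (𝓝 (2 * p * binEnt α)) :=
    (hs_lim.const_mul 2).mul_const _
  have lhs : Tendsto (fun m => 2 * Tα (s m)) atTop (𝓝 (2 * Tα p)) := hT1.const_mul 2
  have rhs : Tendsto (fun m => 2 * Tα (s m)) atTop (𝓝 (Tα (2*p) + 2 * p * binEnt α)) := by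
    refine Tendsto.congr (fun m => (hid m).symm) (hT2.add hT3)
  exact tendsto_nhds_unique lhs rhs
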